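/- arXiv:2406.08697 — 6 statements merged into one kernel-verified Lean document; each statement's English description precedes it below -/
import Mathlib

section
/- In the single-period R-learner setup, with e an 𝔖-measurable version of E[A | 𝔖] and m an 𝔖-measurable version of E[Y | 𝔖], the residualized identification holds: E[Y − m − (A − e)·τ | 𝔄] = 0 P-almost surely. Equivalently, Y − m = (A − e)·τ + ε with E[ε | 𝔄] = 0 a.s. -/
open MeasureTheory

/-- Single-period R-learner residualized identification (the paper's estimating moment):
`E[Y − m − (A − e)·τ | 𝔄] = 0` almost surely, where `τ = q1 − q0`,
`e` is a version of `E[A|𝔖]` and `m` is a version of `E[Y|𝔖]`. -/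
theorem residualized_identification
    {Ω : Type*} [F : MeasurableSpace Ω] {P : Measure Ω} [IsProbabilityMeasure P]
    {𝔖 𝔄 : MeasurableSpace Ω} (hSA : 𝔖 ≤ 𝔄) (hAF : 𝔄 ≤ F)
    (A Y q0 q1 e m : Ω → ℝ)
    (hA : StronglyMeasurable[𝔄] A)
    (hA01 : ∀ᵐ ω ∂P, A ω = 0 ∨ A ω = 1)
    (hY : MemLp Y 2 P)
    (hq0meas : StronglyMeasurable[𝔖] q0) (hq1meas : StronglyMeasurable[𝔖] q1)
    (hq0L2 : MemLp q0 2 P) (hq1L2 : MemLp q1 2 P)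
    (hQ : (fun ω => q0 ω * (1 - A ω) + q1 ω * A ω) =ᵐ[P] P[Y|𝔄])
    (hemeas : StronglyMeasurable[𝔖] e) (he : e =ᵐ[P] P[A|𝔖])
    (hmmeas : StronglyMeasurable[𝔖] m) (hm : m =ᵐ[P] P[Y|𝔖]) :
    P[fun ω => Y ω - m ω - (A ω - e ω) * (q1 ω - q0 ω)|𝔄] =ᵐ[P] (0 : Ω → ℝ) := by
  set τ : Ω → ℝ := fun ω => q1 ω - q0 ω with hτdef
  have hSF : 𝔖 ≤ F := hSA.trans hAF
  have hτmeas : StronglyMeasurable[𝔖] τ := hq1meas.sub hq0meas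
  have hτint : Integrable τ P := ((hq1L2.sub hq0L2).integrable (by norm_num))
  have hYint : Integrable Y P := hY.integrable (by norm_num)
  have hAbd : ∀ᵐ ω ∂P, ‖A ω‖ ≤ 1 := by
    filter_upwards [hA01] with ω h
    rcases h with h | h <;> simp [h]
  have hAmeasF : @AEStronglyMeasurable Ω ℝ _ F F A P := (hA.mono hAF).aestronglyMeasurable
  have hAint : Integrable A P := Integrable.mono' (integrable_const 1) hAmeasF hAbd
  have heint : Integrable e P := integrable_condExp.congr he.symm
  have hmint : Integrable m P := integrable_condExp.congr hm.symm
  -- |e| ≤ 1 a.e.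
  have he0 : (0 : Ω → ℝ) ≤ᵐ[P] P[A|𝔖] := by
    have := condExp_mono (m := 𝔖) (μ := P) (integrable_const (0:ℝ)) hAint
      (by filter_upwards [hA01] with ω h; rcases h with h | h <;> simp [h])
    rw [condExp_const hSF] at this
    exact this
  have he1 : P[A|𝔖] ≤ᵐ[P] (fun _ => (1:ℝ)) := by
    have := condExp_mono (m := 𝔖) (μ := P) hAint (integrable_const (1:ℝ))
      (by filter_upwards [hA01] with ω h; rcases h with h | h <;> simp [h])
    rw [condExp_const hSF] at this
    exact this
  have hebd : ∀ᵐ ω ∂P, ‖e ω‖ ≤ 1 := by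
    filter_upwards [he, he0, he1] with ω h h0 h1
    rw [h, Real.norm_eq_abs, abs_le]
    simp only [Pi.zero_apply] at h0
    exact ⟨by linarith, h1⟩
  have hAτint : Integrable (fun ω => A ω * τ ω) P := by
    refine Integrable.mono' hτint.norm ((hA.mono hAF).aestronglyMeasurable.mul hτint.1) ?_
    filter_upwards [hAbd] with ω h
    simp only [norm_mul, Real.norm_eq_abs] at *
    calc |A ω| * |τ ω| ≤ 1 * |τ ω| := by
          exact mul_le_mul_of_nonneg_right h (abs_nonneg _)
      _ = ‖τ ω‖ := by simp
  have heτint : Integrable (fun ω => e ω * τ ω) P := by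
    refine Integrable.mono' hτint.norm ((hemeas.mono hSF).aestronglyMeasurable.mul hτint.1) ?_
    filter_upwards [hebd] with ω h
    simp only [norm_mul, Real.norm_eq_abs] at *
    calc |e ω| * |τ ω| ≤ 1 * |τ ω| := by
          exact mul_le_mul_of_nonneg_right h (abs_nonneg _)
      _ = ‖τ ω‖ := by simp
  -- Step A : E[Y|𝔄] = q0 + A τ a.e.
  have hstepA : P[Y|𝔄] =ᵐ[P] fun ω => q0 ω + A ω * τ ω := by
    refine hQ.symm.trans (Filter.Eventually.of_forall fun ω => ?_)
    simp only [hτdef]; ring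
  -- Step B : m = q0 + e τ a.e.
  have hstepB : m =ᵐ[P] fun ω => q0 ω + e ω * τ ω := by
    have h1 : P[Y|𝔖] =ᵐ[P] P[P[Y|𝔄]|𝔖] := (condExp_condExp_of_le hSA hAF).symm
    have h2 : P[P[Y|𝔄]|𝔖] =ᵐ[P] P[fun ω => q0 ω + A ω * τ ω|𝔖] := condExp_congr_ae hstepA
    have h3 : P[fun ω => q0 ω + A ω * τ ω|𝔖]
        =ᵐ[P] P[q0|𝔖] + P[fun ω => A ω * τ ω|𝔖] :=
      condExp_add (hq0L2.integrable (by norm_num)) hAτint 𝔖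
    have h4 : P[q0|𝔖] = q0 :=
      condExp_of_stronglyMeasurable hSF hq0meas (hq0L2.integrable (by norm_num))
    have h5 : P[fun ω => A ω * τ ω|𝔖] =ᵐ[P] fun ω => τ ω * e ω := by
      have hmul : P[τ * A|𝔖] =ᵐ[P] τ * P[A|𝔖] :=
        condExp_mul_of_stronglyMeasurable_left hτmeas
          (by convert hAτint using 1; funext ω; exact mul_comm _ _) hAint
      have : (fun ω => A ω * τ ω) = τ * A := by funext ω; simp [mul_comm]
      rw [this]
      refine hmul.trans ?_
      filter_upwards [he] with ω h
      simp [h]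
    calc m =ᵐ[P] P[Y|𝔖] := hm
      _ =ᵐ[P] P[P[Y|𝔄]|𝔖] := h1
      _ =ᵐ[P] P[fun ω => q0 ω + A ω * τ ω|𝔖] := h2
      _ =ᵐ[P] P[q0|𝔖] + P[fun ω => A ω * τ ω|𝔖] := h3
      _ =ᵐ[P] fun ω => q0 ω + e ω * τ ω := by
          filter_upwards [h5] with ω h5
          simp only [Pi.add_apply, h4, h5]; ring
  -- Step C
  set h : Ω → ℝ := fun ω => m ω + (A ω - e ω) * τ ω with hhdef
  have hhAmeas : StronglyMeasurable[𝔄] h :=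
    (hmmeas.mono hSA).add (((hA.sub (hemeas.mono hSA))).mul (hτmeas.mono hSA))
  have hAeτint : Integrable (fun ω => (A ω - e ω) * τ ω) P := by
    have : (fun ω => (A ω - e ω) * τ ω)
        = fun ω => A ω * τ ω - e ω * τ ω := by funext ω; ring
    rw [this]; exact hAτint.sub heτint
  have hhint : Integrable h P := hmint.add hAeτint
  have hsplit : (fun ω => Y ω - m ω - (A ω - e ω) * (q1 ω - q0 ω)) = Y - h := by
    funext ω; simp only [hhdef, hτdef, Pi.sub_apply]; ring
  rw [hsplit]
  calc P[Y - h|𝔄] =ᵐ[P] P[Y|𝔄] - P[h|𝔄] := condExp_sub hYint hhint 𝔄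
    _ =ᵐ[P] (0 : Ω → ℝ) := by
        have hch : P[h|𝔄] = h := condExp_of_stronglyMeasurable hAF hhAmeas hhint
        filter_upwards [hstepA, hstepB] with ω ha hb
        rw [hch]
        simp only [Pi.sub_apply, ha, hch, hhdef, Pi.zero_apply]
        rw [show m ω = q0 ω + e ω * τ ω from hb]
        ring
end

section
/- In the single-period R-learner setup, with e an 𝔖-measurable version of E[A | 𝔖] and m an 𝔖-measurable version of E[Y | 𝔖], the loss functional is Neyman-orthogonal in the behavior-policy and outcome-mean nuisance directions: for all bounded 𝔖-measurable random variables Δe, Δm, and ν, (i) E[τ·Δe·(A − e)·ν] = 0, (ii) E[(Y − m − (A − e)·τ)·Δe·ν] = 0, and (iii) E[Δm·(A − e)·ν] = 0. Consequently the mixed Gâteaux derivatives D_{e,τ}L(τ, η°)[Δe, ν] and D_{m,τ}L(τ, η°)[Δm, ν] of the population loss L(g; e, m) = E[(Y − m − (A − e)g)²], evaluated at the true nuisances and true τ, vanish. -/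
open MeasureTheory

lemma integrable_mul_of_memℒp_two {Ω : Type*} [MeasurableSpace Ω] {P : Measure Ω}
    {f g : Ω → ℝ} (hf : MemLp f 2 P) (hg : MemLp g 2 P) :
    Integrable (fun ω => f ω * g ω) P := by
  refine Integrable.mono' ((hf.integrable_sq.add hg.integrable_sq).div_const 2)
    (hf.1.mul hg.1) (Filter.Eventually.of_forall fun ω => ?_)
  simp only [Pi.add_apply, Real.norm_eq_abs, abs_mul]
  nlinarith [sq_nonneg (|f ω| - |g ω|), sq_abs (f ω), sq_abs (g ω), abs_nonneg (f ω), abs_nonneg (g ω)]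

lemma key_orth {Ω : Type*} [F : MeasurableSpace Ω] {P : Measure Ω} [IsProbabilityMeasure P]
    {𝔖 : MeasurableSpace Ω} (hSF : 𝔖 ≤ F) {g X : Ω → ℝ}
    (hg : StronglyMeasurable[𝔖] g) (hX : Integrable X P)
    (hgX : Integrable (fun ω => g ω * X ω) P) (hc : P[X|𝔖] =ᵐ[P] 0) :
    ∫ ω, g ω * X ω ∂P = 0 := by
  have h1 : P[(fun ω => g ω * X ω)|𝔖] =ᵐ[P] fun ω => g ω * (P[X|𝔖]) ω :=
    condExp_mul_of_stronglyMeasurable_left hg hgX hX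
  rw [← integral_condExp (f := fun ω => g ω * X ω) hSF]
  have h2 : P[(fun ω => g ω * X ω)|𝔖] =ᵐ[P] (fun _ => (0 : ℝ)) := by
    filter_upwards [h1, hc] with ω h1 h2
    rw [h1, h2]; simp
  rw [integral_congr_ae h2, integral_const]; simp

/-- Universal orthogonality of the R-learner loss in the behavior-policy (`e`) and
outcome-mean (`m`) nuisance directions: for all bounded `𝔖`-measurable `Δe, Δm, ν`,
(i) `E[τ·Δe·(A − e)·ν] = 0`, (ii) `E[(Y − m − (A − e)τ)·Δe·ν] = 0`,
(iii) `E[Δm·(A − e)·ν] = 0`; consequently the mixed Gâteaux derivatives of the population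
loss at the true nuisances vanish. -/
theorem universal_orthogonality
    {Ω : Type*} [F : MeasurableSpace Ω] {P : Measure Ω} [IsProbabilityMeasure P]
    {𝔖 𝔄 : MeasurableSpace Ω} (hSA : 𝔖 ≤ 𝔄) (hAF : 𝔄 ≤ F)
    (A Y q0 q1 e m : Ω → ℝ)
    (hA : StronglyMeasurable[𝔄] A)
    (hA01 : ∀ᵐ ω ∂P, A ω = 0 ∨ A ω = 1)
    (hY : MemLp Y 2 P)
    (hq0meas : StronglyMeasurable[𝔖] q0) (hq1meas : StronglyMeasurable[𝔖] q1)
    (hq0L2 : MemLp q0 2 P) (hq1L2 : MemLp q1 2 P)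
    (hQ : (fun ω => q0 ω * (1 - A ω) + q1 ω * A ω) =ᵐ[P] P[Y|𝔄])
    (τ : Ω → ℝ) (hτ : τ = fun ω => q1 ω - q0 ω)
    (hemeas : StronglyMeasurable[𝔖] e) (he : e =ᵐ[P] P[A|𝔖])
    (hmmeas : StronglyMeasurable[𝔖] m) (hm : m =ᵐ[P] P[Y|𝔖])
    (Δe Δm ν : Ω → ℝ)
    (hΔemeas : StronglyMeasurable[𝔖] Δe) (hΔebdd : ∃ c, ∀ ω, |Δe ω| ≤ c)
    (hΔmmeas : StronglyMeasurable[𝔖] Δm) (hΔmbdd : ∃ c, ∀ ω, |Δm ω| ≤ c)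
    (hνmeas : StronglyMeasurable[𝔖] ν) (hνbdd : ∃ c, ∀ ω, |ν ω| ≤ c) :
    (∫ ω, τ ω * Δe ω * (A ω - e ω) * ν ω ∂P = 0)
    ∧ (∫ ω, (Y ω - m ω - (A ω - e ω) * τ ω) * Δe ω * ν ω ∂P = 0)
    ∧ (∫ ω, Δm ω * (A ω - e ω) * ν ω ∂P = 0) := by
  have hSF : 𝔖 ≤ F := hSA.trans hAF
  obtain ⟨ce, hce⟩ := hΔebdd
  obtain ⟨cm, hcm⟩ := hΔmbdd
  obtain ⟨cν, hcν⟩ := hνbdd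
  -- measurability facts
  have hAmeasF : AEStronglyMeasurable[F] A P := (hA.mono hAF).aestronglyMeasurable
  have hemeasF : AEStronglyMeasurable[F] e P := (hemeas.mono hSF).aestronglyMeasurable
  -- A is bounded a.e. by 1
  have hAbdd : ∀ᵐ ω ∂P, ‖A ω‖ ≤ 1 := by
    filter_upwards [hA01] with ω h
    rcases h with h | h <;> simp [h]
  have hAint : Integrable A P :=
    memLp_one_iff_integrable.mp (MemLp.of_bound hAmeasF 1 hAbdd)
  have heint : Integrable e P := integrable_condExp.congr he.symm
  have hXint : Integrable (fun ω => A ω - e ω) P := hAint.sub heint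
  -- e is bounded a.e. by 1
  have he01 : ∀ᵐ ω ∂P, |e ω| ≤ 1 := by
    have h0 : (0 : Ω → ℝ) ≤ᵐ[P] P[A|𝔖] :=
      condExp_nonneg (by filter_upwards [hA01] with ω h; rcases h with h | h <;> simp [h])
    have h1 : P[A|𝔖] ≤ᵐ[P] P[(fun _ => (1:ℝ))|𝔖] :=
      condExp_mono hAint (integrable_const 1)
        (by filter_upwards [hA01] with ω h; rcases h with h | h <;> simp [h])
    have hconst : P[(fun _ => (1:ℝ))|𝔖] = fun _ => (1:ℝ) := condExp_const hSF 1
    rw [hconst] at h1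
    filter_upwards [he, h0, h1] with ω hω h0ω h1ω
    rw [hω]
    simp only [Pi.zero_apply] at h0ω
    rw [abs_le]
    exact ⟨by linarith, h1ω⟩
  -- bound on A - e
  have hXbdd : ∀ᵐ ω ∂P, |A ω - e ω| ≤ 2 := by
    filter_upwards [hAbdd, he01] with ω h1 h2
    have := abs_sub (A ω) (e ω)
    simp only [Real.norm_eq_abs] at h1
    calc |A ω - e ω| ≤ |A ω| + |e ω| := abs_sub _ _
      _ ≤ 1 + 1 := add_le_add h1 h2
      _ = 2 := by norm_num
  -- τ is in L2
  have hτ2 : MemLp τ 2 P := by rw [hτ]; exact hq1L2.sub hq0L2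
  have hτmeas : StronglyMeasurable[𝔖] τ := by rw [hτ]; exact hq1meas.sub hq0meas
  have hτint : Integrable τ P := hτ2.integrable one_le_two
  -- conditional expectation of A - e vanishes
  have hcondX : P[(fun ω => A ω - e ω)|𝔖] =ᵐ[P] 0 := by
    have h1 : P[(fun ω => A ω - e ω)|𝔖] =ᵐ[P] P[A|𝔖] - P[e|𝔖] := condExp_sub (m := 𝔖) hAint heint
    have h2 : P[e|𝔖] = e := condExp_of_stronglyMeasurable hSF hemeas heint
    filter_upwards [h1, he] with ω hω heω
    simp only [Pi.sub_apply, h2, Pi.zero_apply] at *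
    rw [hω, ← heω]; ring
  -- conditional expectation of Y - m vanishes
  have hYint : Integrable Y P := hY.integrable one_le_two
  have hmint : Integrable m P := integrable_condExp.congr hm.symm
  have hcondYm : P[(fun ω => Y ω - m ω)|𝔖] =ᵐ[P] 0 := by
    have h1 : P[(fun ω => Y ω - m ω)|𝔖] =ᵐ[P] P[Y|𝔖] - P[m|𝔖] := condExp_sub (m := 𝔖) hYint hmint
    have h2 : P[m|𝔖] = m := condExp_of_stronglyMeasurable hSF hmmeas hmint
    filter_upwards [h1, hm] with ω hω hmω
    simp only [Pi.sub_apply, h2, Pi.zero_apply] at *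
    rw [hω, ← hmω]; ring
  -- part (i)
  have hg1meas : StronglyMeasurable[𝔖] fun ω => τ ω * Δe ω * ν ω :=
    (hτmeas.mul hΔemeas).mul hνmeas
  have hg1measF : AEStronglyMeasurable[F] (fun ω => τ ω * Δe ω * ν ω) P :=
    (hg1meas.mono hSF).aestronglyMeasurable
  have hprod1int : Integrable (fun ω => (τ ω * Δe ω * ν ω) * (A ω - e ω)) P := by
    refine Integrable.mono' ((hτint.abs.const_mul (ce * cν * 2)))
      (hg1measF.mul hXint.1) ?_
    filter_upwards [hXbdd] with ω hX2
    have h1 : (0:ℝ) ≤ ce := le_trans (abs_nonneg _) (hce ω)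
    have h2 : (0:ℝ) ≤ cν := le_trans (abs_nonneg _) (hcν ω)
    simp only [Real.norm_eq_abs, abs_mul]
    have h4 : |Δe ω| * |ν ω| ≤ ce * cν := mul_le_mul (hce ω) (hcν ω) (abs_nonneg _) h1
    have h3 : |Δe ω| * |ν ω| * |A ω - e ω| ≤ ce * cν * 2 :=
      mul_le_mul h4 hX2 (abs_nonneg _) (mul_nonneg h1 h2)
    calc |τ ω| * |Δe ω| * |ν ω| * |A ω - e ω|
        = |τ ω| * (|Δe ω| * |ν ω| * |A ω - e ω|) := by ring
      _ ≤ |τ ω| * (ce * cν * 2) := mul_le_mul_of_nonneg_left h3 (abs_nonneg _)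
      _ = ce * cν * 2 * |τ ω| := by ring
  have part1 : ∫ ω, τ ω * Δe ω * (A ω - e ω) * ν ω ∂P = 0 := by
    have hre : ∀ ω, τ ω * Δe ω * (A ω - e ω) * ν ω
        = (τ ω * Δe ω * ν ω) * (A ω - e ω) := fun ω => by ring
    simp_rw [hre]
    exact key_orth (F := F) (P := P) hSF hg1meas hXint hprod1int hcondX
  -- part (iii)
  have hg3meas : StronglyMeasurable[𝔖] fun ω => Δm ω * ν ω := hΔmmeas.mul hνmeas
  have hprod3int : Integrable (fun ω => (Δm ω * ν ω) * (A ω - e ω)) P := by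
    refine hXint.bdd_mul ((hg3meas.mono hSF).aestronglyMeasurable) (c := cm * cν) (Filter.Eventually.of_forall fun ω => ?_)
    simp only [Real.norm_eq_abs, abs_mul]
    have h2 : (0:ℝ) ≤ cν := le_trans (abs_nonneg _) (hcν ω)
    exact mul_le_mul (hcm ω) (hcν ω) (abs_nonneg _)
      (le_trans (abs_nonneg _) (hcm ω))
  have part3 : ∫ ω, Δm ω * (A ω - e ω) * ν ω ∂P = 0 := by
    have hre : ∀ ω, Δm ω * (A ω - e ω) * ν ω = (Δm ω * ν ω) * (A ω - e ω) := fun ω => by ring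
    simp_rw [hre]
    exact key_orth (F := F) (P := P) hSF hg3meas hXint hprod3int hcondX
  -- part (ii)
  have hg2meas : StronglyMeasurable[𝔖] fun ω => Δe ω * ν ω := hΔemeas.mul hνmeas
  have hYmint : Integrable (fun ω => Y ω - m ω) P := hYint.sub hmint
  have hprod2int : Integrable (fun ω => (Δe ω * ν ω) * (Y ω - m ω)) P := by
    refine hYmint.bdd_mul ((hg2meas.mono hSF).aestronglyMeasurable) (c := ce * cν) (Filter.Eventually.of_forall fun ω => ?_)
    simp only [Real.norm_eq_abs, abs_mul]
    exact mul_le_mul (hce ω) (hcν ω) (abs_nonneg _) (le_trans (abs_nonneg _) (hce ω))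
  have partYm : ∫ ω, (Δe ω * ν ω) * (Y ω - m ω) ∂P = 0 :=
    key_orth (F := F) (P := P) hSF hg2meas hYmint hprod2int hcondYm
  have part2 : ∫ ω, (Y ω - m ω - (A ω - e ω) * τ ω) * Δe ω * ν ω ∂P = 0 := by
    have hre : ∀ ω, (Y ω - m ω - (A ω - e ω) * τ ω) * Δe ω * ν ω
        = (Δe ω * ν ω) * (Y ω - m ω) - (τ ω * Δe ω * ν ω) * (A ω - e ω) := fun ω => by ring
    simp_rw [hre]
    rw [integral_sub hprod2int hprod1int, partYm]
    have : ∫ ω, (τ ω * Δe ω * ν ω) * (A ω - e ω) ∂P = 0 := by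
      have hre2 : ∀ ω, (τ ω * Δe ω * ν ω) * (A ω - e ω)
          = τ ω * Δe ω * (A ω - e ω) * ν ω := fun ω => by ring
      simp_rw [hre2]; exact part1
    rw [this]; ring
  exact ⟨part1, part2, part3⟩
end

section
/- In the single-period R-learner setup, with e an 𝔖-measurable version of E[A | 𝔖] and m an 𝔖-measurable version of E[Y | 𝔖]: the true difference of Q-functions τ minimizes the population R-learner loss, i.e. for every bounded 𝔖-measurable g, E[(Y − m − (A − e)·τ)²] ≤ E[(Y − m − (A − e)·g)²], with equality if and only if E[(A − e)²(g − τ)²] = 0. In particular, if E[(A − e)² | 𝔖] ≥ λ/2 P-a.s. for some λ > 0 and τ is bounded, then any bounded 𝔖-measurable minimizer g equals τ P-almost surely. -/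
open MeasureTheory

lemma rl_memLp_condexp {Ω : Type*} {𝔖 : MeasurableSpace Ω} [F : MeasurableSpace Ω]
    {P : Measure Ω} [IsProbabilityMeasure P] (hSF : 𝔖 ≤ F) {Y : Ω → ℝ}
    (hY : MemLp Y 2 P) : MemLp (P[Y|𝔖]) 2 P := by
  have hgm : AEStronglyMeasurable[𝔖] ((condExpL2 ℝ ℝ hSF (hY.toLp Y) : Lp ℝ 2 P) : Ω → ℝ) P :=
    lpMeas.aestronglyMeasurable _
  have h1 : Integrable Y P := hY.integrable one_le_two
  have h2 : MemLp ((condExpL2 ℝ ℝ hSF (hY.toLp Y) : Lp ℝ 2 P) : Ω → ℝ) 2 P :=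
    Lp.memLp _
  have hgeq : ((condExpL2 ℝ ℝ hSF (hY.toLp Y) : Lp ℝ 2 P) : Ω → ℝ) =ᵐ[P] P[Y|𝔖] := by
    refine ae_eq_condExp_of_forall_setIntegral_eq hSF h1
      (fun s _ _ => (h2.integrable one_le_two).integrableOn)
      (fun s hs hμs => ?_) hgm
    rw [integral_condExpL2_eq hSF (hY.toLp Y) hs hμs.ne]
    exact setIntegral_congr_ae (hSF s hs) ((MemLp.coeFn_toLp hY).mono fun ω h _ => h)
  exact h2.ae_eq hgeq

lemma rl_mul_integrable {Ω : Type*} [F : MeasurableSpace Ω] {P : Measure Ω}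
    [IsFiniteMeasure P] {f g : Ω → ℝ} (hf : MemLp f 2 P) (hg : MemLp g 2 P) :
    Integrable (fun ω => f ω * g ω) P := by
  have h := hg.smul (φ := f) hf (r := 1)
    (hpqr := ⟨by rw [inv_one]; exact ENNReal.inv_two_add_inv_two⟩)
  rwa [memLp_one_iff_integrable] at h

lemma rl_main
    {Ω : Type*} {𝔖 𝔄 : MeasurableSpace Ω} [F : MeasurableSpace Ω] {P : Measure Ω}
    [IsProbabilityMeasure P]
    (hSA : 𝔖 ≤ 𝔄) (hAF : 𝔄 ≤ F)
    (A Y q0 q1 e m : Ω → ℝ)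
    (hA : StronglyMeasurable[𝔄] A)
    (hA01 : ∀ᵐ ω ∂P, A ω = 0 ∨ A ω = 1)
    (hY : MemLp Y 2 P)
    (hq0meas : StronglyMeasurable[𝔖] q0) (hq1meas : StronglyMeasurable[𝔖] q1)
    (hq0L2 : MemLp q0 2 P) (hq1L2 : MemLp q1 2 P)
    (hQ : (fun ω => q0 ω * (1 - A ω) + q1 ω * A ω) =ᵐ[P] P[Y|𝔄])
    (τ : Ω → ℝ) (hτ : τ = fun ω => q1 ω - q0 ω)
    (hemeas : StronglyMeasurable[𝔖] e) (he : e =ᵐ[P] P[A|𝔖])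
    (hmmeas : StronglyMeasurable[𝔖] m) (hm : m =ᵐ[P] P[Y|𝔖]) :
    (∀ g : Ω → ℝ, StronglyMeasurable[𝔖] g → (∃ c, ∀ ω, |g ω| ≤ c) →
      (∫ ω, (Y ω - m ω - (A ω - e ω) * τ ω) ^ 2 ∂P)
        ≤ (∫ ω, (Y ω - m ω - (A ω - e ω) * g ω) ^ 2 ∂P)
      ∧ ((∫ ω, (Y ω - m ω - (A ω - e ω) * τ ω) ^ 2 ∂P)
            = (∫ ω, (Y ω - m ω - (A ω - e ω) * g ω) ^ 2 ∂P)
          ↔ ∫ ω, (A ω - e ω) ^ 2 * (g ω - τ ω) ^ 2 ∂P = 0))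
    ∧ (∀ lam : ℝ, 0 < lam →
        (∀ᵐ ω ∂P, lam / 2 ≤ (P[fun ω' => (A ω' - e ω') ^ 2|𝔖]) ω) →
        (∃ c, ∀ ω, |τ ω| ≤ c) →
        ∀ g : Ω → ℝ, StronglyMeasurable[𝔖] g → (∃ c, ∀ ω, |g ω| ≤ c) →
          (∀ h : Ω → ℝ, StronglyMeasurable[𝔖] h → (∃ c, ∀ ω, |h ω| ≤ c) →
            (∫ ω, (Y ω - m ω - (A ω - e ω) * g ω) ^ 2 ∂P)
              ≤ (∫ ω, (Y ω - m ω - (A ω - e ω) * h ω) ^ 2 ∂P)) →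
          g =ᵐ[P] τ) := by
  have hSF : 𝔖 ≤ F := hSA.trans hAF
  have hτpt : ∀ ω, τ ω = q1 ω - q0 ω := fun ω => by rw [hτ]
  have hτm : StronglyMeasurable[𝔖] τ := hτ ▸ hq1meas.sub hq0meas
  have hτL2 : MemLp τ 2 P :=
    ((hq1L2.sub hq0L2).ae_eq (Filter.Eventually.of_forall fun ω => (hτpt ω).symm))
  have hAF' : StronglyMeasurable A := hA.mono hAF
  have heF : StronglyMeasurable e := hemeas.mono hSF
  have hmF : StronglyMeasurable m := hmmeas.mono hSF
  have hτF : StronglyMeasurable τ := hτm.mono hSF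
  have hA01' : ∀ᵐ ω ∂P, 0 ≤ A ω ∧ A ω ≤ 1 := by
    filter_upwards [hA01] with ω h
    rcases h with h | h <;> simp [h]
  have hAL2 : MemLp A 2 P := by
    refine MemLp.of_bound hAF'.aestronglyMeasurable 1 ?_
    filter_upwards [hA01'] with ω h
    rw [Real.norm_eq_abs, abs_le]; exact ⟨by linarith [h.1], h.2⟩
  have hAint : Integrable A P := hAL2.integrable one_le_two
  have heb : ∀ᵐ ω ∂P, 0 ≤ e ω ∧ e ω ≤ 1 := by
    have h0 : (0 : Ω → ℝ) ≤ᵐ[P] P[A|𝔖] :=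
      condExp_nonneg (hA01'.mono fun ω h => h.1)
    have h1 : P[A|𝔖] ≤ᵐ[P] P[(fun _ => (1 : ℝ))|𝔖] :=
      condExp_mono hAint (integrable_const 1) (hA01'.mono fun ω h => h.2)
    have h2 : P[(fun _ => (1 : ℝ))|𝔖] = fun _ => (1 : ℝ) := condExp_const hSF 1
    filter_upwards [he, h0, h1] with ω hee h0ω h1ω
    rw [h2] at h1ω
    exact ⟨hee ▸ h0ω, hee ▸ h1ω⟩
  have hAe_bd : ∀ᵐ ω ∂P, |A ω - e ω| ≤ 1 := by
    filter_upwards [hA01', heb] with ω h1 h2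
    rw [abs_le]; constructor <;> [linarith [h1.1, h2.2]; linarith [h1.2, h2.1]]
  have hAeSM : StronglyMeasurable (fun ω => A ω - e ω) := hAF'.sub heF
  have hAeL2 : MemLp (fun ω => A ω - e ω) 2 P := by
    refine MemLp.of_bound hAeSM.aestronglyMeasurable 1 ?_
    filter_upwards [hAe_bd] with ω h
    rwa [Real.norm_eq_abs]
  have hmL2 : MemLp m 2 P := (rl_memLp_condexp hSF hY).ae_eq hm.symm
  -- (A - e) * τ  is in L²
  have hAeτ2 : MemLp (fun ω => (A ω - e ω) * τ ω) 2 P := by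
    refine MemLp.of_le hτL2 (hAeSM.mul hτF).aestronglyMeasurable ?_
    filter_upwards [hAe_bd] with ω h
    rw [Real.norm_eq_abs, Real.norm_eq_abs, abs_mul]
    calc |A ω - e ω| * |τ ω| ≤ 1 * |τ ω| :=
          mul_le_mul_of_nonneg_right h (abs_nonneg _)
      _ = |τ ω| := one_mul _
  have hR'2 : MemLp (fun ω => Y ω - m ω - (A ω - e ω) * τ ω) 2 P :=
    ((hY.sub hmL2).sub hAeτ2).ae_eq (Filter.Eventually.of_forall fun ω => rfl)
  -- orthogonality
  have horth : ∀ h : Ω → ℝ, StronglyMeasurable[𝔖] h → MemLp h 2 P →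
      ∫ ω, ((A ω - e ω) * h ω) * (Y ω - m ω - (A ω - e ω) * τ ω) ∂P = 0 := by
    intro h hhm hh2
    have hhF : StronglyMeasurable h := hhm.mono hSF
    have hφm : StronglyMeasurable[𝔄] (fun ω => (A ω - e ω) * h ω) :=
      (hA.sub (hemeas.mono hSA)).mul (hhm.mono hSA)
    have hφ2 : MemLp (fun ω => (A ω - e ω) * h ω) 2 P := by
      refine MemLp.of_le hh2 (hAeSM.mul hhF).aestronglyMeasurable ?_
      filter_upwards [hAe_bd] with ω hb
      rw [Real.norm_eq_abs, Real.norm_eq_abs, abs_mul]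
      calc |A ω - e ω| * |h ω| ≤ 1 * |h ω| := mul_le_mul_of_nonneg_right hb (abs_nonneg _)
        _ = |h ω| := one_mul _
    have hcross : Integrable
        (fun ω => ((A ω - e ω) * h ω) * (Y ω - m ω - (A ω - e ω) * τ ω)) P :=
      rl_mul_integrable hφ2 hR'2
    have hBm : StronglyMeasurable[𝔄] (fun ω => m ω + (A ω - e ω) * τ ω) :=
      (hmmeas.mono hSA).add ((hA.sub (hemeas.mono hSA)).mul (hτm.mono hSA))
    have hBint : Integrable (fun ω => m ω + (A ω - e ω) * τ ω) P :=
      ((hmL2.add hAeτ2).ae_eq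
        (Filter.Eventually.of_forall fun ω => rfl)).integrable one_le_two
    have hYint : Integrable Y P := hY.integrable one_le_two
    have hRint : Integrable (fun ω => Y ω - m ω - (A ω - e ω) * τ ω) P :=
      hR'2.integrable one_le_two
    have hcond1 : P[(fun ω => Y ω - m ω - (A ω - e ω) * τ ω)|𝔄]
        =ᵐ[P] fun ω => q0 ω + e ω * τ ω - m ω := by
      have hB : P[(fun ω => m ω + (A ω - e ω) * τ ω)|𝔄]
          = fun ω => m ω + (A ω - e ω) * τ ω :=
        condExp_of_stronglyMeasurable hAF hBm hBint
      calc P[(fun ω => Y ω - m ω - (A ω - e ω) * τ ω)|𝔄]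
          =ᵐ[P] P[(Y - fun ω => m ω + (A ω - e ω) * τ ω)|𝔄] :=
            condExp_congr_ae (Filter.Eventually.of_forall fun ω => by
              show Y ω - m ω - (A ω - e ω) * τ ω = Y ω - (m ω + (A ω - e ω) * τ ω)
              ring)
        _ =ᵐ[P] P[Y|𝔄] - P[(fun ω => m ω + (A ω - e ω) * τ ω)|𝔄] :=
            condExp_sub hYint hBint 𝔄
        _ =ᵐ[P] fun ω => q0 ω + e ω * τ ω - m ω := by
            filter_upwards [hQ] with ω hQω
            rw [Pi.sub_apply, hB]
            show (P[Y|𝔄]) ω - (m ω + (A ω - e ω) * τ ω) = q0 ω + e ω * τ ω - m ω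
            rw [← hQω, hτpt ω]; ring
    have hpull : P[(fun ω => ((A ω - e ω) * h ω) * (Y ω - m ω - (A ω - e ω) * τ ω))|𝔄]
        =ᵐ[P] fun ω => ((A ω - e ω) * h ω)
            * ((P[(fun ω => Y ω - m ω - (A ω - e ω) * τ ω)|𝔄]) ω) :=
      condExp_mul_of_stronglyMeasurable_left hφm hcross hRint
    have hstep1 : ∫ ω, ((A ω - e ω) * h ω) * (Y ω - m ω - (A ω - e ω) * τ ω) ∂P
        = ∫ ω, ((A ω - e ω) * h ω) * (q0 ω + e ω * τ ω - m ω) ∂P := by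
      calc ∫ ω, ((A ω - e ω) * h ω) * (Y ω - m ω - (A ω - e ω) * τ ω) ∂P
          = ∫ ω, (P[(fun ω => ((A ω - e ω) * h ω)
              * (Y ω - m ω - (A ω - e ω) * τ ω))|𝔄]) ω ∂P := (integral_condExp hAF).symm
        _ = ∫ ω, ((A ω - e ω) * h ω)
              * ((P[(fun ω => Y ω - m ω - (A ω - e ω) * τ ω)|𝔄]) ω) ∂P :=
            integral_congr_ae hpull
        _ = ∫ ω, ((A ω - e ω) * h ω) * (q0 ω + e ω * τ ω - m ω) ∂P := by
            refine integral_congr_ae ?_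
            filter_upwards [hcond1] with ω hc
            simp only [hc]
    have heτ2 : MemLp (fun ω => e ω * τ ω) 2 P := by
      refine MemLp.of_le hτL2 (heF.mul hτF).aestronglyMeasurable ?_
      filter_upwards [heb] with ω hb
      rw [Real.norm_eq_abs, Real.norm_eq_abs, abs_mul]
      calc |e ω| * |τ ω| ≤ 1 * |τ ω| :=
            mul_le_mul_of_nonneg_right
              (abs_le.mpr ⟨by linarith [hb.1], hb.2⟩) (abs_nonneg _)
        _ = |τ ω| := one_mul _
    have hcL2 : MemLp (fun ω => q0 ω + e ω * τ ω - m ω) 2 P :=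
      ((hq0L2.add heτ2).sub hmL2).ae_eq (Filter.Eventually.of_forall fun ω => rfl)
    have hψm : StronglyMeasurable[𝔖] (fun ω => h ω * (q0 ω + e ω * τ ω - m ω)) :=
      hhm.mul ((hq0meas.add (hemeas.mul hτm)).sub hmmeas)
    have hψint : Integrable (fun ω => h ω * (q0 ω + e ω * τ ω - m ω)) P :=
      rl_mul_integrable hh2 hcL2
    have hψF : StronglyMeasurable (fun ω => h ω * (q0 ω + e ω * τ ω - m ω)) :=
      hψm.mono hSF
    have hAψint : Integrable (fun ω => A ω * (h ω * (q0 ω + e ω * τ ω - m ω))) P := by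
      refine hψint.abs.mono' (hAF'.mul hψF).aestronglyMeasurable ?_
      filter_upwards [hA01'] with ω hb
      have hb1 : |A ω| ≤ 1 := abs_le.mpr ⟨by linarith [hb.1], hb.2⟩
      rw [Real.norm_eq_abs, abs_mul]
      calc |A ω| * |h ω * (q0 ω + e ω * τ ω - m ω)| ≤ 1 * |h ω * (q0 ω + e ω * τ ω - m ω)| :=
            mul_le_mul_of_nonneg_right hb1 (abs_nonneg _)
        _ = |h ω * (q0 ω + e ω * τ ω - m ω)| := one_mul _
    have heψint : Integrable (fun ω => e ω * (h ω * (q0 ω + e ω * τ ω - m ω))) P := by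
      refine hψint.abs.mono' (heF.mul hψF).aestronglyMeasurable ?_
      filter_upwards [heb] with ω hb
      have hb1 : |e ω| ≤ 1 := abs_le.mpr ⟨by linarith [hb.1], hb.2⟩
      rw [Real.norm_eq_abs, abs_mul]
      calc |e ω| * |h ω * (q0 ω + e ω * τ ω - m ω)| ≤ 1 * |h ω * (q0 ω + e ω * τ ω - m ω)| :=
            mul_le_mul_of_nonneg_right hb1 (abs_nonneg _)
        _ = |h ω * (q0 ω + e ω * τ ω - m ω)| := one_mul _
    have hψAint : Integrable (fun ω => (h ω * (q0 ω + e ω * τ ω - m ω)) * A ω) P :=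
      hAψint.congr (Filter.Eventually.of_forall fun ω => by ring)
    have hpull2 : P[(fun ω => (h ω * (q0 ω + e ω * τ ω - m ω)) * A ω)|𝔖]
        =ᵐ[P] fun ω => (h ω * (q0 ω + e ω * τ ω - m ω)) * ((P[A|𝔖]) ω) :=
      condExp_mul_of_stronglyMeasurable_left hψm hψAint hAint
    have hAψ : ∫ ω, A ω * (h ω * (q0 ω + e ω * τ ω - m ω)) ∂P
        = ∫ ω, e ω * (h ω * (q0 ω + e ω * τ ω - m ω)) ∂P := by
      calc ∫ ω, A ω * (h ω * (q0 ω + e ω * τ ω - m ω)) ∂P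
          = ∫ ω, (h ω * (q0 ω + e ω * τ ω - m ω)) * A ω ∂P :=
            integral_congr_ae (Filter.Eventually.of_forall fun ω => by ring)
        _ = ∫ ω, (P[(fun ω => (h ω * (q0 ω + e ω * τ ω - m ω)) * A ω)|𝔖]) ω ∂P :=
            (integral_condExp hSF).symm
        _ = ∫ ω, (h ω * (q0 ω + e ω * τ ω - m ω)) * ((P[A|𝔖]) ω) ∂P :=
            integral_congr_ae hpull2
        _ = ∫ ω, (h ω * (q0 ω + e ω * τ ω - m ω)) * e ω ∂P := by
            refine integral_congr_ae ?_
            filter_upwards [he] with ω hee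
            rw [← hee]
        _ = ∫ ω, e ω * (h ω * (q0 ω + e ω * τ ω - m ω)) ∂P :=
            integral_congr_ae (Filter.Eventually.of_forall fun ω => by ring)
    have hsum : ∫ ω, ((A ω - e ω) * h ω) * (q0 ω + e ω * τ ω - m ω) ∂P
        = (∫ ω, A ω * (h ω * (q0 ω + e ω * τ ω - m ω)) ∂P)
          - ∫ ω, e ω * (h ω * (q0 ω + e ω * τ ω - m ω)) ∂P := by
      rw [← integral_sub hAψint heψint]
      exact integral_congr_ae (Filter.Eventually.of_forall fun ω => by ring)
    rw [hstep1, hsum, hAψ, sub_self]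
  -- key identity
  have hkey : ∀ g : Ω → ℝ, StronglyMeasurable[𝔖] g → (∃ c, ∀ ω, |g ω| ≤ c) →
      (∫ ω, (Y ω - m ω - (A ω - e ω) * g ω) ^ 2 ∂P)
        = (∫ ω, (Y ω - m ω - (A ω - e ω) * τ ω) ^ 2 ∂P)
          + ∫ ω, (A ω - e ω) ^ 2 * (g ω - τ ω) ^ 2 ∂P := by
    intro g hgm hgb
    obtain ⟨c, hc⟩ := hgb
    have hgF : StronglyMeasurable g := hgm.mono hSF
    have hg2 : MemLp g 2 P :=
      MemLp.of_bound hgF.aestronglyMeasurable c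
        (Filter.Eventually.of_forall fun ω => by rw [Real.norm_eq_abs]; exact hc ω)
    have hd2 : MemLp (fun ω => τ ω - g ω) 2 P :=
      (hτL2.sub hg2).ae_eq (Filter.Eventually.of_forall fun ω => rfl)
    have hdm : StronglyMeasurable[𝔖] (fun ω => τ ω - g ω) := hτm.sub hgm
    have hdF : StronglyMeasurable (fun ω => τ ω - g ω) := hdm.mono hSF
    have hφd2 : MemLp (fun ω => (A ω - e ω) * (τ ω - g ω)) 2 P := by
      refine MemLp.of_le hd2 (hAeSM.mul hdF).aestronglyMeasurable ?_
      filter_upwards [hAe_bd] with ω hb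
      rw [Real.norm_eq_abs, Real.norm_eq_abs, abs_mul]
      calc |A ω - e ω| * |τ ω - g ω| ≤ 1 * |τ ω - g ω| :=
            mul_le_mul_of_nonneg_right hb (abs_nonneg _)
        _ = |τ ω - g ω| := one_mul _
    have i1 : Integrable (fun ω => (Y ω - m ω - (A ω - e ω) * τ ω) ^ 2) P :=
      hR'2.integrable_sq
    have i2' : Integrable (fun ω => ((A ω - e ω) * (τ ω - g ω)) ^ 2) P :=
      hφd2.integrable_sq
    have i2 : Integrable (fun ω => (A ω - e ω) ^ 2 * (g ω - τ ω) ^ 2) P :=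
      i2'.congr (Filter.Eventually.of_forall fun ω => by ring)
    have i3 : Integrable (fun ω => 2 * (((A ω - e ω) * (τ ω - g ω))
        * (Y ω - m ω - (A ω - e ω) * τ ω))) P :=
      (rl_mul_integrable hφd2 hR'2).const_mul 2
    have h0 := horth (fun ω => τ ω - g ω) hdm hd2
    calc ∫ ω, (Y ω - m ω - (A ω - e ω) * g ω) ^ 2 ∂P
        = ∫ ω, ((Y ω - m ω - (A ω - e ω) * τ ω) ^ 2
            + (A ω - e ω) ^ 2 * (g ω - τ ω) ^ 2
            + 2 * (((A ω - e ω) * (τ ω - g ω)) * (Y ω - m ω - (A ω - e ω) * τ ω))) ∂P :=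
          integral_congr_ae (Filter.Eventually.of_forall fun ω => by ring)
      _ = (∫ ω, ((Y ω - m ω - (A ω - e ω) * τ ω) ^ 2
            + (A ω - e ω) ^ 2 * (g ω - τ ω) ^ 2) ∂P)
            + ∫ ω, 2 * (((A ω - e ω) * (τ ω - g ω))
              * (Y ω - m ω - (A ω - e ω) * τ ω)) ∂P :=
          integral_add (i1.add i2) i3
      _ = (∫ ω, (Y ω - m ω - (A ω - e ω) * τ ω) ^ 2 ∂P)
            + (∫ ω, (A ω - e ω) ^ 2 * (g ω - τ ω) ^ 2 ∂P)
            + ∫ ω, 2 * (((A ω - e ω) * (τ ω - g ω))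
              * (Y ω - m ω - (A ω - e ω) * τ ω)) ∂P := by
          rw [integral_add i1 i2]
      _ = (∫ ω, (Y ω - m ω - (A ω - e ω) * τ ω) ^ 2 ∂P)
            + ∫ ω, (A ω - e ω) ^ 2 * (g ω - τ ω) ^ 2 ∂P := by
          rw [integral_const_mul, h0, mul_zero, add_zero]
  -- conclusions
  constructor
  · intro g hgm hgb
    have hI : 0 ≤ ∫ ω, (A ω - e ω) ^ 2 * (g ω - τ ω) ^ 2 ∂P :=
      integral_nonneg fun ω => by positivity
    have hk := hkey g hgm hgb
    refine ⟨by linarith, ⟨fun heq => by linarith, fun h0 => by rw [hk, h0, add_zero]⟩⟩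
  · intro lam hlam hcond hτb g hgm hgb hmin
    obtain ⟨c, hc⟩ := hgb
    obtain ⟨cτ, hcτ⟩ := hτb
    have hk := hkey g hgm ⟨c, hc⟩
    have hle := hmin τ hτm ⟨cτ, hcτ⟩
    have hI0 : 0 ≤ ∫ ω, (A ω - e ω) ^ 2 * (g ω - τ ω) ^ 2 ∂P :=
      integral_nonneg fun ω => by positivity
    have hIeq : ∫ ω, (A ω - e ω) ^ 2 * (g ω - τ ω) ^ 2 ∂P = 0 :=
      le_antisymm (by linarith) hI0
    have hgF : StronglyMeasurable g := hgm.mono hSF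
    have hfm : StronglyMeasurable (fun ω => (A ω - e ω) ^ 2 * (g ω - τ ω) ^ 2) :=
      (hAeSM.pow 2).mul ((hgF.sub hτF).pow 2)
    have hfi : Integrable (fun ω => (A ω - e ω) ^ 2 * (g ω - τ ω) ^ 2) P := by
      refine (integrable_const ((c + cτ) ^ 2)).mono' hfm.aestronglyMeasurable ?_
      filter_upwards [hAe_bd] with ω h1
      have h2 : (A ω - e ω) ^ 2 ≤ 1 := by
        nlinarith [abs_nonneg (A ω - e ω), sq_abs (A ω - e ω)]
      have habs : |g ω - τ ω| ≤ c + cτ :=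
        (abs_sub (g ω) (τ ω)).trans (add_le_add (hc ω) (hcτ ω))
      have h3 : (g ω - τ ω) ^ 2 ≤ (c + cτ) ^ 2 := by
        nlinarith [abs_nonneg (g ω - τ ω), sq_abs (g ω - τ ω)]
      rw [Real.norm_eq_abs, abs_of_nonneg (by positivity)]
      nlinarith [sq_nonneg (g ω - τ ω), sq_nonneg (A ω - e ω)]
    have hae : ∀ᵐ ω ∂P, (A ω - e ω) ^ 2 * (g ω - τ ω) ^ 2 = 0 := by
      have h := (integral_eq_zero_iff_of_nonneg_ae
        (Filter.Eventually.of_forall fun ω => by positivity) hfi).mp hIeq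
      filter_upwards [h] with ω hω
      simpa using hω
    have hwint : Integrable (fun ω' => (A ω' - e ω') ^ 2) P := hAeL2.integrable_sq
    have hum : StronglyMeasurable[𝔖] (fun ω => (g ω - τ ω) ^ 2) := (hgm.sub hτm).pow 2
    have huwint : Integrable (fun ω => (g ω - τ ω) ^ 2 * (A ω - e ω) ^ 2) P :=
      hfi.congr (Filter.Eventually.of_forall fun ω => by ring)
    have hpull3 : P[(fun ω => (g ω - τ ω) ^ 2 * (A ω - e ω) ^ 2)|𝔖]
        =ᵐ[P] fun ω => (g ω - τ ω) ^ 2 * ((P[fun ω' => (A ω' - e ω') ^ 2|𝔖]) ω) :=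
      condExp_mul_of_stronglyMeasurable_left hum huwint hwint
    have hzero : P[(fun ω => (g ω - τ ω) ^ 2 * (A ω - e ω) ^ 2)|𝔖] =ᵐ[P] (0 : Ω → ℝ) := by
      have h00 : (fun ω => (g ω - τ ω) ^ 2 * (A ω - e ω) ^ 2) =ᵐ[P] (0 : Ω → ℝ) := by
        filter_upwards [hae] with ω h
        simp only [Pi.zero_apply]
        rw [mul_comm]; exact h
      have hcz : P[(0 : Ω → ℝ)|𝔖] =ᵐ[P] (0 : Ω → ℝ) := by
        rw [condExp_zero]
      exact (condExp_congr_ae h00).trans hcz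
    filter_upwards [hpull3, hzero, hcond] with ω h1 h2 h3
    simp only [Pi.zero_apply] at h2
    rw [h2] at h1
    have h5 : (g ω - τ ω) ^ 2 = 0 := by
      by_contra hne
      have hu : 0 < (g ω - τ ω) ^ 2 := lt_of_le_of_ne (sq_nonneg _) (Ne.symm hne)
      have hpos : 0 < (P[fun ω' => (A ω' - e ω') ^ 2|𝔖]) ω :=
        lt_of_lt_of_le (by linarith) h3
      nlinarith
    have h6 : g ω - τ ω = 0 := by
      have h7 : |g ω - τ ω| = 0 := by nlinarith [sq_abs (g ω - τ ω), abs_nonneg (g ω - τ ω)]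
      exact abs_eq_zero.mp h7
    linarith [h6]

/-- The true difference of Q-functions `τ` minimizes the population R-learner loss
`g ↦ E[(Y − m − (A − e)g)²]` over bounded `𝔖`-measurable `g`, with equality iff
`E[(A − e)²(g − τ)²] = 0`; and under the conditional-variance lower bound
`E[(A − e)² | 𝔖] ≥ λ/2` a.s. (with `λ > 0`) and boundedness of `τ`, any bounded
`𝔖`-measurable minimizer equals `τ` almost surely. -/
theorem tau_minimizes_population_loss
    {Ω : Type*} [F : MeasurableSpace Ω] {P : Measure Ω} [IsProbabilityMeasure P]
    {𝔖 𝔄 : MeasurableSpace Ω} (hSA : 𝔖 ≤ 𝔄) (hAF : 𝔄 ≤ F)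
    (A Y q0 q1 e m : Ω → ℝ)
    (hA : StronglyMeasurable[𝔄] A)
    (hA01 : ∀ᵐ ω ∂P, A ω = 0 ∨ A ω = 1)
    (hY : MemLp Y 2 P)
    (hq0meas : StronglyMeasurable[𝔖] q0) (hq1meas : StronglyMeasurable[𝔖] q1)
    (hq0L2 : MemLp q0 2 P) (hq1L2 : MemLp q1 2 P)
    (hQ : (fun ω => q0 ω * (1 - A ω) + q1 ω * A ω) =ᵐ[P] P[Y|𝔄])
    (τ : Ω → ℝ) (hτ : τ = fun ω => q1 ω - q0 ω)
    (hemeas : StronglyMeasurable[𝔖] e) (he : e =ᵐ[P] P[A|𝔖])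
    (hmmeas : StronglyMeasurable[𝔖] m) (hm : m =ᵐ[P] P[Y|𝔖]) :
    (∀ g : Ω → ℝ, StronglyMeasurable[𝔖] g → (∃ c, ∀ ω, |g ω| ≤ c) →
      (∫ ω, (Y ω - m ω - (A ω - e ω) * τ ω) ^ 2 ∂P)
        ≤ (∫ ω, (Y ω - m ω - (A ω - e ω) * g ω) ^ 2 ∂P)
      ∧ ((∫ ω, (Y ω - m ω - (A ω - e ω) * τ ω) ^ 2 ∂P)
            = (∫ ω, (Y ω - m ω - (A ω - e ω) * g ω) ^ 2 ∂P)
          ↔ ∫ ω, (A ω - e ω) ^ 2 * (g ω - τ ω) ^ 2 ∂P = 0))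
    ∧ (∀ lam : ℝ, 0 < lam →
        (∀ᵐ ω ∂P, lam / 2 ≤ (P[fun ω' => (A ω' - e ω') ^ 2|𝔖]) ω) →
        (∃ c, ∀ ω, |τ ω| ≤ c) →
        ∀ g : Ω → ℝ, StronglyMeasurable[𝔖] g → (∃ c, ∀ ω, |g ω| ≤ c) →
          (∀ h : Ω → ℝ, StronglyMeasurable[𝔖] h → (∃ c, ∀ ω, |h ω| ≤ c) →
            (∫ ω, (Y ω - m ω - (A ω - e ω) * g ω) ^ 2 ∂P)
              ≤ (∫ ω, (Y ω - m ω - (A ω - e ω) * h ω) ^ 2 ∂P)) →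
          g =ᵐ[P] τ) := by
  exact @rl_main Ω 𝔖 𝔄 F P _ hSA hAF A Y q0 q1 e m hA hA01 hY hq0meas hq1meas
    hq0L2 hq1L2 hQ τ hτ hemeas he hmmeas hm
end

section
/- Let (S, 𝒮, μ) be a measure space and f, f̂ : S → ℝ measurable functions (the true and estimated difference of Q-functions over two actions). Define the greedy decision rules π*(s) = 1 iff f(s) > 0 and π̂(s) = 1 iff f̂(s) > 0, and the pointwise decision regret r(s) := |f(s)| if π̂(s) ≠ π*(s) and r(s) := 0 otherwise. Suppose t > 0 is such that |f̂(s) − f(s)| ≤ t for all s ∈ S, and the margin condition μ{s : 0 < |f(s)| ≤ 2t} ≤ C(2t)^α holds for constants C ≥ 0 and α ≥ 0. Then ∫_S r dμ ≤ C·(2t)^{1+α} = C·2^{1+α}·t^{1+α}. -/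
open MeasureTheory
/-- Sup-norm-rate case of the paper's Lemma 2 (margin): if the estimate `f̂` of the true
difference of Q-functions `f` is uniformly within `t` of `f`, and the margin condition
`μ{s : 0 < |f s| ≤ 2t} ≤ C(2t)^α` holds, then the integrated decision regret `r`
(where `r s = |f s|` if the greedy rules disagree at `s`, else `0`) is at most
`C·(2t)^{1+α}`. -/
theorem margin_regret_sup_norm
    {S : Type*} [MeasurableSpace S] (μ : Measure S)
    (f fhat : S → ℝ) (hf : Measurable f) (hfhat : Measurable fhat)
    (r : S → ℝ)
    (hr : ∀ s, r s = if (0 < fhat s) ↔ (0 < f s) then 0 else |f s|)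
    (t : ℝ) (ht : 0 < t)
    (hunif : ∀ s, |fhat s - f s| ≤ t)
    (C α : ℝ) (hC : 0 ≤ C) (hα : 0 ≤ α)
    (hmargin : μ {s | 0 < |f s| ∧ |f s| ≤ 2 * t} ≤ ENNReal.ofReal (C * (2 * t) ^ α)) :
    ∫ s, r s ∂μ ≤ C * (2 * t) ^ ((1 : ℝ) + α) := by
  set A : Set S := {s | 0 < |f s| ∧ |f s| ≤ 2 * t} with hA
  have hAmeas : MeasurableSet A := by
    apply MeasurableSet.inter
    · exact measurableSet_lt measurable_const hf.abs
    · exact measurableSet_le hf.abs measurable_const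
  have hAfin : μ A < ⊤ := lt_of_le_of_lt hmargin ENNReal.ofReal_lt_top
  -- pointwise bound r ≤ (2t) * indicator A
  have hbound : ∀ s, r s ≤ A.indicator (fun _ => 2 * t) s := by
    intro s
    rw [hr s]
    by_cases h : (0 < fhat s) ↔ (0 < f s)
    · simp only [h, if_true]
      exact Set.indicator_nonneg (fun _ _ => by linarith) s
    · simp only [h, if_false]
      by_cases hfz : f s = 0
      · simp [hfz]
        exact Set.indicator_nonneg (fun _ _ => by linarith) s
      · have habs : 0 < |f s| := abs_pos.mpr hfz
        have hle : |f s| ≤ 2 * t := by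
          have hd := hunif s
          rcases abs_le.mp hd with ⟨h1, h2⟩
          rcases lt_trichotomy (f s) 0 with hlt | heq | hgt
          · -- f s < 0, so ¬(0 < f s); since h fails, 0 < fhat s
            have hfh : 0 < fhat s := by
              by_contra hc
              exact h ⟨fun hh => absurd hh hc, fun hh => absurd hh (not_lt.mpr hlt.le)⟩
            have : -f s ≤ t := by linarith
            rw [abs_of_neg hlt]; linarith
          · exact absurd heq hfz
          · have hfh : ¬ 0 < fhat s := by
              by_contra hc
              exact h ⟨fun _ => hgt, fun _ => hc⟩
            rw [abs_of_pos hgt]; push_neg at hfh; linarith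
        have hsA : s ∈ A := ⟨habs, hle⟩
        rw [Set.indicator_of_mem hsA]
        exact hle
  have hrnn : ∀ s, 0 ≤ r s := by
    intro s; rw [hr s]; split
    · exact le_refl 0
    · exact abs_nonneg _
  have hrmeas : Measurable r := by
    have : r = fun s => if (0 < fhat s) ↔ (0 < f s) then 0 else |f s| := funext hr
    rw [this]
    apply Measurable.ite _ measurable_const hf.abs
    have h1 : MeasurableSet {s | 0 < fhat s} := measurableSet_lt measurable_const hfhat
    have h2 : MeasurableSet {s | 0 < f s} := measurableSet_lt measurable_const hf
    have : {s | (0 < fhat s) ↔ (0 < f s)} =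
        ({s | 0 < fhat s} ∩ {s | 0 < f s}) ∪ ({s | 0 < fhat s}ᶜ ∩ {s | 0 < f s}ᶜ) := by
      ext s; by_cases ha : 0 < fhat s <;> by_cases hb : 0 < f s <;> simp [ha, hb]
    rw [this]
    exact ((h1.inter h2).union (h1.compl.inter h2.compl))
  have hgint : Integrable (A.indicator (fun _ => 2 * t)) μ :=
    (integrable_indicator_iff hAmeas).mpr ((integrableOn_const_iff (C := 2 * t)).mpr (Or.inr hAfin))
  have hmono : ∫ s, r s ∂μ ≤ ∫ s, A.indicator (fun _ => 2 * t) s ∂μ :=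
    integral_mono_of_nonneg (Filter.Eventually.of_forall hrnn) hgint
      (Filter.Eventually.of_forall hbound)
  have hgval : ∫ s, A.indicator (fun _ => 2 * t) s ∂μ = (2 * t) * (μ A).toReal := by
    rw [integral_indicator_const _ hAmeas]; simp [mul_comm, Measure.real]
  have hμA : (μ A).toReal ≤ C * (2 * t) ^ α := by
    have := ENNReal.toReal_mono ENNReal.ofReal_ne_top hmargin
    rwa [ENNReal.toReal_ofReal (by positivity)] at this
  calc ∫ s, r s ∂μ ≤ (2 * t) * (μ A).toReal := by rw [← hgval]; exact hmono
    _ ≤ (2 * t) * (C * (2 * t) ^ α) := by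
        apply mul_le_mul_of_nonneg_left hμA (by linarith)
    _ = C * (2 * t) ^ ((1 : ℝ) + α) := by
        rw [Real.rpow_add (by linarith), Real.rpow_one]; ring
end

section
/- Let (S, 𝒮, μ) be a measure space and f, f̂ : S → ℝ measurable functions. Define π*(s) = 1 iff f(s) > 0, π̂(s) = 1 iff f̂(s) > 0, and the pointwise decision regret r(s) := |f(s)| if π̂(s) ≠ π*(s) and r(s) := 0 otherwise. Fix ε > 0 and suppose the margin condition μ{s : 0 < |f(s)| ≤ ε} ≤ C·ε^α holds for constants C ≥ 0, α ≥ 0, and that ∫_S (f̂ − f)² dμ < ∞. Then ∫_S r dμ ≤ C·ε^{1+α} + (4/ε)·∫_S (f̂ − f)² dμ. (Key pointwise facts: on the mistake set {π̂ ≠ π*}, |f(s)| ≤ 2|f̂(s) − f(s)|, so where additionally |f(s)| > ε one has r(s) ≤ 4(f̂(s) − f(s))²/ε.) -/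
open MeasureTheory

/-- ε-truncation bound in the integrated-risk case of the paper's Lemma 2 (margin):
if `μ{s : 0 < |f s| ≤ ε} ≤ C ε^α` and `∫ (f̂ − f)² dμ < ∞`, then the integrated
decision regret satisfies `∫ r dμ ≤ C ε^{1+α} + (4/ε) ∫ (f̂ − f)² dμ`. -/
theorem margin_regret_truncation
    {S : Type*} [MeasurableSpace S] (μ : Measure S)
    (f fhat : S → ℝ) (hf : Measurable f) (hfhat : Measurable fhat)
    (r : S → ℝ)
    (hr : ∀ s, r s = if (0 < fhat s) ↔ (0 < f s) then 0 else |f s|)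
    (ε : ℝ) (hε : 0 < ε)
    (C α : ℝ) (hC : 0 ≤ C) (hα : 0 ≤ α)
    (hmargin : μ {s | 0 < |f s| ∧ |f s| ≤ ε} ≤ ENNReal.ofReal (C * ε ^ α))
    (hint : Integrable (fun s => (fhat s - f s) ^ 2) μ) :
    ∫ s, r s ∂μ
      ≤ C * ε ^ ((1 : ℝ) + α) + (4 / ε) * ∫ s, (fhat s - f s) ^ 2 ∂μ := by
  set A : Set S := {s | 0 < |f s| ∧ |f s| ≤ ε} with hA_def
  have hA : MeasurableSet A := by
    apply MeasurableSet.inter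
    · exact measurableSet_lt measurable_const hf.abs
    · exact measurableSet_le hf.abs measurable_const
  have hAfin : μ A < ⊤ := lt_of_le_of_lt hmargin ENNReal.ofReal_lt_top
  set g : S → ℝ := fun s => A.indicator (fun _ => ε) s + (4 / ε) * (fhat s - f s) ^ 2
    with hg_def
  have hgint : Integrable g μ := by
    apply Integrable.add
    · exact (IntegrableOn.integrable_indicator
        (integrableOn_const hAfin.ne) hA)
    · exact hint.const_mul _
  have hle : ∀ s, r s ≤ g s := by
    intro s
    have hnn : 0 ≤ (4 / ε) * (fhat s - f s) ^ 2 := by positivity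
    have hind : 0 ≤ A.indicator (fun _ : S => ε) s :=
      Set.indicator_nonneg (fun _ _ => hε.le) s
    rw [hr s]
    by_cases hiff : (0 < fhat s) ↔ (0 < f s)
    · simp only [if_pos hiff]; simp only [hg_def]; linarith
    · simp only [if_neg hiff]
      -- |f s| ≤ |fhat s - f s|
      have key : |f s| ≤ |fhat s - f s| := by
        by_cases h1 : 0 < fhat s
        · have h2 : f s ≤ 0 := le_of_not_gt (fun h => hiff ⟨fun _ => h, fun _ => h1⟩)
          rw [abs_of_nonpos h2, abs_of_pos (by linarith)]
          linarith
        · have h1' : fhat s ≤ 0 := le_of_not_gt h1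
          have h2 : 0 < f s := by
            by_contra h
            exact hiff ⟨fun hh => absurd hh h1, fun hh => absurd hh h⟩
          rw [abs_of_pos h2, abs_of_nonpos (by linarith)]
          linarith
      by_cases hsmall : |f s| ≤ ε
      · by_cases hpos : 0 < |f s|
        · have hmem : s ∈ A := ⟨hpos, hsmall⟩
          simp only [hg_def, Set.indicator_of_mem hmem]
          linarith
        · have : |f s| = 0 := le_antisymm (le_of_not_gt hpos) (abs_nonneg _)
          simp only [hg_def]; linarith
      · push_neg at hsmall
        have hd : ε < |fhat s - f s| := lt_of_lt_of_le hsmall key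
        have hsq : (fhat s - f s) ^ 2 = |fhat s - f s| ^ 2 := (sq_abs _).symm
        have : |f s| ≤ (4 / ε) * (fhat s - f s) ^ 2 := by
          rw [hsq]
          rw [div_mul_eq_mul_div, le_div_iff₀ hε]
          nlinarith [abs_nonneg (f s), abs_nonneg (fhat s - f s)]
        simp only [hg_def]; linarith
  have hrnn : ∀ s, 0 ≤ r s := by
    intro s; rw [hr s]
    split
    · exact le_refl 0
    · exact abs_nonneg _
  calc ∫ s, r s ∂μ ≤ ∫ s, g s ∂μ := by
        apply integral_mono_of_nonneg
        · exact Filter.Eventually.of_forall hrnn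
        · exact hgint
        · exact Filter.Eventually.of_forall hle
    _ = ε * (μ A).toReal + (4 / ε) * ∫ s, (fhat s - f s) ^ 2 ∂μ := by
        rw [hg_def]
        rw [integral_add (IntegrableOn.integrable_indicator
          (integrableOn_const hAfin.ne) hA) (hint.const_mul _)]
        rw [integral_indicator_const _ hA, integral_const_mul, measureReal_def, smul_eq_mul,
          mul_comm (μ A).toReal ε]
    _ ≤ C * ε ^ ((1 : ℝ) + α) + (4 / ε) * ∫ s, (fhat s - f s) ^ 2 ∂μ := by
        have h1 : (μ A).toReal ≤ C * ε ^ α := by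
          have := ENNReal.toReal_mono ENNReal.ofReal_ne_top hmargin
          rwa [ENNReal.toReal_ofReal (by positivity)] at this
        have h2 : ε * (μ A).toReal ≤ C * ε ^ ((1 : ℝ) + α) := by
          rw [Real.rpow_add hε, Real.rpow_one]
          calc ε * (μ A).toReal ≤ ε * (C * ε ^ α) := by
                exact mul_le_mul_of_nonneg_left h1 hε.le
            _ = C * (ε * ε ^ α) := by ring
          
        linarith
end

section
/- Let (S, 𝒮, μ) be a measure space and f, f̂ : S → ℝ measurable functions. Define π*(s) = 1 iff f(s) > 0, π̂(s) = 1 iff f̂(s) > 0, and the pointwise decision regret r(s) := |f(s)| if π̂(s) ≠ π*(s) and r(s) := 0 otherwise. Suppose the margin condition μ{s : 0 < |f(s)| ≤ ε} ≤ C·ε^α holds for every ε > 0, with constants C ≥ 0 and α ≥ 0, and that the integrated squared estimation error satisfies ∫_S (f̂ − f)² dμ ≤ K²·n^{−2b} for some K ≥ 0, b > 0 and real n ≥ 1. Then ∫_S r dμ ≤ (C + 4K²)·n^{−2b(1+α)/(2+α)}. (The bound follows by applying the ε-truncation inequality ∫ r dμ ≤ Cε^{1+α} + (4/ε)∫(f̂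 − f)² dμ with the balancing choice ε = n^{−2b/(2+α)}.) -/
open MeasureTheory

/-- Quantitative conclusion of the paper's Lemma 2 (margin): if the margin condition
`μ{s : 0 < |f s| ≤ ε} ≤ C ε^α` holds for every `ε > 0` and the integrated squared
estimation error satisfies `∫ (f̂ − f)² dμ ≤ K² n^{−2b}`, then the integrated decision
regret is at most `(C + 4K²) n^{−2b(1+α)/(2+α)}`. -/
theorem margin_regret_rate
    {S : Type*} [MeasurableSpace S] (μ : Measure S)
    (f fhat : S → ℝ) (hf : Measurable f) (hfhat : Measurable fhat)
    (r : S → ℝ)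
    (hr : ∀ s, r s = if (0 < fhat s) ↔ (0 < f s) then 0 else |f s|)
    (C α : ℝ) (hC : 0 ≤ C) (hα : 0 ≤ α)
    (hmargin : ∀ ε : ℝ, 0 < ε →
      μ {s | 0 < |f s| ∧ |f s| ≤ ε} ≤ ENNReal.ofReal (C * ε ^ α))
    (hint : Integrable (fun s => (fhat s - f s) ^ 2) μ)
    (K b n : ℝ) (hK : 0 ≤ K) (hb : 0 < b) (hn : 1 ≤ n)
    (hrate : ∫ s, (fhat s - f s) ^ 2 ∂μ ≤ K ^ 2 * n ^ (-(2 * b))) :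
    ∫ s, r s ∂μ ≤ (C + 4 * K ^ 2) * n ^ (-(2 * b * (1 + α) / (2 + α))) := by
  have hn0 : (0:ℝ) < n := lt_of_lt_of_le one_pos hn
  have h2α : (0:ℝ) < 2 + α := by linarith
  set ε : ℝ := n ^ (-(2 * b / (2 + α))) with hεdef
  have hεpos : 0 < ε := Real.rpow_pos_of_pos hn0 _
  set A : Set S := {s | 0 < |f s| ∧ |f s| ≤ ε} with hAdef
  have hAmeas : MeasurableSet A := by
    apply MeasurableSet.inter
    · exact measurableSet_lt measurable_const hf.abs
    · exact measurableSet_le hf.abs measurable_const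
  have hμA : μ A ≤ ENNReal.ofReal (C * ε ^ α) := hmargin ε hεpos
  have hμAfin : μ A < ⊤ := lt_of_le_of_lt hμA ENNReal.ofReal_lt_top
  have hindint : Integrable (A.indicator (fun _ => ε)) μ :=
    (integrableOn_const hμAfin.ne).integrable_indicator hAmeas
  set g : S → ℝ := fun s => A.indicator (fun _ => ε) s + (1/ε) * (fhat s - f s) ^ 2 with hgdef
  have hgint : Integrable g μ := hindint.add (hint.const_mul _)
  have hrg : ∀ s, r s ≤ g s := by
    intro s
    rw [hr]
    have hind : (0:ℝ) ≤ A.indicator (fun _ => ε) s := Set.indicator_nonneg (fun _ _ => hεpos.le) s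
    have hsq : 0 ≤ (1/ε) * (fhat s - f s) ^ 2 := by positivity
    by_cases h : (0 < fhat s) ↔ (0 < f s)
    · simp only [h, if_true, hgdef]
      linarith
    · simp only [h, if_false, hgdef]
      have habs : |f s| ≤ |fhat s - f s| := by
        by_cases hfs : 0 < f s
        · have hft : ¬ 0 < fhat s := fun hh => h ⟨fun _ => hfs, fun _ => hh⟩
          push_neg at hft
          rw [abs_of_pos hfs, abs_of_nonpos (by linarith : fhat s - f s ≤ 0)]; linarith
        · have hft : 0 < fhat s := by
            by_contra hh; exact h ⟨fun x => absurd x hh, fun x => absurd x hfs⟩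
          push_neg at hfs
          rw [abs_of_nonpos hfs, abs_of_nonneg (by linarith : (0:ℝ) ≤ fhat s - f s)]; linarith
      by_cases hsm : |f s| ≤ ε
      · by_cases h0 : 0 < |f s|
        · have hmem : s ∈ A := ⟨h0, hsm⟩
          rw [Set.indicator_of_mem hmem]
          linarith
        · have : |f s| = 0 := le_antisymm (not_lt.mp h0) (abs_nonneg _)
          rw [this]; linarith
      · push_neg at hsm
        have key : |f s| * ε ≤ (fhat s - f s) ^ 2 := by
          nlinarith [sq_abs (fhat s - f s), abs_nonneg (f s), abs_nonneg (fhat s - f s)]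
        have h2 : |f s| ≤ (1/ε) * (fhat s - f s) ^ 2 := by
          rw [one_div, ← div_eq_inv_mul]
          exact (le_div_iff₀ hεpos).mpr key
        linarith
  have hr0 : ∀ s, 0 ≤ r s := by
    intro s; rw [hr]; split_ifs
    · exact le_rfl
    · exact abs_nonneg _
  have step1 : ∫ s, r s ∂μ ≤ ∫ s, g s ∂μ :=
    integral_mono_of_nonneg (Filter.Eventually.of_forall hr0) hgint
      (Filter.Eventually.of_forall hrg)
  have step2 : ∫ s, g s ∂μ = (μ A).toReal * ε + (1/ε) * ∫ s, (fhat s - f s) ^ 2 ∂μ := by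
    rw [hgdef]
    rw [integral_add hindint (hint.const_mul _), integral_indicator_const _ hAmeas,
      MeasureTheory.integral_const_mul]
    simp [smul_eq_mul, measureReal_def]
  have hμAle : (μ A).toReal ≤ C * ε ^ α :=
    ENNReal.toReal_le_of_le_ofReal (by positivity) hμA
  have hεα : 0 < ε ^ α := Real.rpow_pos_of_pos hεpos _
  have step3 : ∫ s, g s ∂μ ≤ C * ε ^ α * ε + (1/ε) * (K ^ 2 * n ^ (-(2 * b))) := by
    rw [step2]
    have h1 : (μ A).toReal * ε ≤ C * ε ^ α * ε :=
      mul_le_mul_of_nonneg_right hμAle hεpos.le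
    have h2 : (1/ε) * ∫ s, (fhat s - f s) ^ 2 ∂μ ≤ (1/ε) * (K ^ 2 * n ^ (-(2 * b))) :=
      mul_le_mul_of_nonneg_left hrate (by positivity)
    linarith
  have hE1 : ε ^ α * ε = n ^ (-(2 * b * (1 + α) / (2 + α))) := by
    rw [hεdef, ← Real.rpow_mul hn0.le, ← Real.rpow_add hn0]
    congr 1
    field_simp
    ring
  have hE2 : (1/ε) * n ^ (-(2 * b)) = n ^ (-(2 * b * (1 + α) / (2 + α))) := by
    rw [hεdef, one_div, ← Real.rpow_neg hn0.le, neg_neg, ← Real.rpow_add hn0]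
    congr 1
    field_simp
    ring
  have heq : C * ε ^ α * ε + (1/ε) * (K ^ 2 * n ^ (-(2 * b)))
      = (C + K ^ 2) * n ^ (-(2 * b * (1 + α) / (2 + α))) := by
    linear_combination C * hE1 + K ^ 2 * hE2
  have hEpos : 0 < n ^ (-(2 * b * (1 + α) / (2 + α))) := Real.rpow_pos_of_pos hn0 _
  have hfin : (C + K ^ 2) * n ^ (-(2 * b * (1 + α) / (2 + α)))
      ≤ (C + 4 * K ^ 2) * n ^ (-(2 * b * (1 + α) / (2 + α))) := by
    apply mul_le_mul_of_nonneg_right _ hEpos.le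
    nlinarith [sq_nonneg K]
  linarith [step1, step3, heq.le, heq.ge]
end
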